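/- Let R be a semiprime commutative Bezout ring that is a Goldie ring. Then every minimal prime ideal of R is principal, generated by an idempotent, and R has only finitely many minimal prime ideals. -/

import Mathlib

/-- A commutative ring is *zip* if every ideal with zero annihilator contains a
finitely generated subideal with zero annihilator. -/
def IsZipRing (R : Type*) [CommRing R] : Prop :=
  ∀ I : Ideal R, Submodule.annihilator I = ⊥ →
    ∃ I₀ : Ideal R, I₀ ≤ I ∧ I₀.FG ∧ Submodule.annihilator I₀ = ⊥

/-- Finite Goldie (uniform) dimension: no infinite independent family of nonzero ideals. -/
def HasFiniteGoldieDim (R : Type*) [CommRing R] : Prop :=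
  ¬ ∃ f : ℕ → Ideal R, (∀ n, f n ≠ ⊥) ∧ iSupIndep f

/-- Ascending chain condition on annihilator ideals. -/
def AccOnAnnihilators (R : Type*) [CommRing R] : Prop :=
  ∀ f : ℕ → Ideal R, Monotone f →
    (∀ n, ∃ J : Ideal R, f n = Submodule.annihilator J) →
    ∃ n, ∀ m, n ≤ m → f m = f n

/-- A Goldie ring: finite Goldie dimension and ACC on annihilator ideals. -/
def IsGoldieRing (R : Type*) [CommRing R] : Prop :=
  HasFiniteGoldieDim R ∧ AccOnAnnihilators R

section Aux

variable {R : Type*} [CommRing R]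

/-- In a reduced ring, an element whose square is zero is zero. -/
lemma aux_sq_zero (hsp : nilradical R = 0) {x : R} (h : x * x = 0) : x = 0 := by
  have hx : x ∈ nilradical R := ⟨2, by rwa [pow_two]⟩
  rw [hsp] at hx
  simpa using hx

lemma aux_mem_ann_span_singleton {c x : R} :
    x ∈ Submodule.annihilator (Ideal.span {c}) ↔ x * c = 0 := by
  rw [Submodule.mem_annihilator]
  constructor
  · intro h
    simpa using h c (Ideal.subset_span rfl)
  · intro h n hn
    obtain ⟨a, rfl⟩ := Ideal.mem_span_singleton'.mp hn
    calc x • (a * c) = a * (x * c) := by rw [smul_eq_mul]; ring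
      _ = 0 := by rw [h, mul_zero]

/-- Elements of a minimal prime of a reduced ring are annihilated by something
outside the prime. -/
lemma aux_exists_annihilating (hsp : nilradical R = 0) {P : Ideal R}
    (hP : P ∈ minimalPrimes R) {a : R} (ha : a ∈ P) : ∃ s, s ∉ P ∧ s * a = 0 := by
  haveI hPp : P.IsPrime := hP.1.1
  have hnil : IsNilpotent (algebraMap R (Localization P.primeCompl) a) := by
    haveI := Ring.KrullDimLE.of_isLocalization P hP (Localization P.primeCompl)
    rw [Ring.KrullDimLE.isNilpotent_iff_mem_maximalIdeal]
    rwa [IsLocalization.AtPrime.to_map_mem_maximal_iff (Localization P.primeCompl) P]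
  obtain ⟨n, hn⟩ := hnil
  rw [← map_pow, IsLocalization.map_eq_zero_iff P.primeCompl] at hn
  obtain ⟨⟨s, hs⟩, hsa⟩ := hn
  refine ⟨s, hs, ?_⟩
  have hsan : s * a ^ n = 0 := hsa
  rcases Nat.eq_zero_or_pos n with rfl | hnpos
  · exfalso
    apply hs
    simp only [pow_zero, mul_one] at hsan
    rw [hsan]
    exact P.zero_mem
  · have : IsNilpotent (s * a) := by
      refine ⟨n, ?_⟩
      rw [mul_pow]
      calc s ^ n * a ^ n = s ^ (n - 1) * (s * a ^ n) := by
            rw [← mul_assoc, ← pow_succ, Nat.sub_add_cancel hnpos]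
        _ = 0 := by rw [hsan, mul_zero]
    have := mem_nilradical.mpr this
    rw [hsp] at this
    simpa using this

/-- ACC on annihilators provides maximal elements in nonempty families of
annihilator ideals. -/
lemma aux_exists_maximal_ann (hacc : AccOnAnnihilators R) (T : Set (Ideal R))
    (hne : T.Nonempty) (hT : ∀ I ∈ T, ∃ J : Ideal R, I = Submodule.annihilator J) :
    ∃ M ∈ T, ∀ I ∈ T, M ≤ I → I = M := by
  by_contra h
  push_neg at h
  -- h : ∀ M ∈ T, ∃ I ∈ T, M ≤ I ∧ I ≠ M
  have h' : ∀ M : {I // I ∈ T}, ∃ I : {I // I ∈ T}, M.1 ≤ I.1 ∧ I.1 ≠ M.1 := by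
    rintro ⟨M, hM⟩
    obtain ⟨I, hI, hle, hne'⟩ := h M hM
    exact ⟨⟨I, hI⟩, hle, hne'⟩
  choose F hF1 hF2 using h'
  obtain ⟨I0, hI0⟩ := hne
  set g : ℕ → {I // I ∈ T} := fun n => F^[n] ⟨I0, hI0⟩ with hg
  have hgsucc : ∀ n, g (n + 1) = F (g n) := fun n => Function.iterate_succ_apply' F n _
  have hmono : Monotone (fun n => (g n).1) := by
    apply monotone_nat_of_le_succ
    intro n
    rw [hgsucc n]
    exact hF1 (g n)
  obtain ⟨n, hn⟩ := hacc (fun n => (g n).1) hmono (fun n => hT _ (g n).2)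
  have := hn (n + 1) (Nat.le_succ n)
  rw [hgsucc n] at this
  exact hF2 (g n) (by simpa using this)

/-- In a reduced ring with ACC on annihilators, every minimal prime is the
annihilator of a principal ideal generated by an element outside it. -/
lemma aux_minimal_prime_eq_ann (hsp : nilradical R = 0) (hacc : AccOnAnnihilators R)
    {P : Ideal R} (hP : P ∈ minimalPrimes R) :
    ∃ c, c ∉ P ∧ P = Submodule.annihilator (Ideal.span {c}) := by
  haveI hPp : P.IsPrime := hP.1.1
  set T : Set (Ideal R) := {I | ∃ s, s ∉ P ∧ I = Submodule.annihilator (Ideal.span {s})} with hT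
  have hne : T.Nonempty := ⟨_, 1, hPp.ne_top ∘ (Ideal.eq_top_iff_one P).mpr, rfl⟩
  obtain ⟨M, ⟨c, hc, rfl⟩, hmax⟩ :=
    aux_exists_maximal_ann hacc T hne (by rintro I ⟨s, _, rfl⟩; exact ⟨_, rfl⟩)
  refine ⟨c, hc, ?_⟩
  ext a
  rw [aux_mem_ann_span_singleton]
  constructor
  · intro haP
    obtain ⟨s, hs, hsa⟩ := aux_exists_annihilating hsp hP haP
    have hcs : c * s ∉ P := fun hmem => ((hPp.mul_mem_iff_mem_or_mem.mp hmem).elim hc hs)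
    have hle : Submodule.annihilator (Ideal.span {c}) ≤
        Submodule.annihilator (Ideal.span {c * s}) := by
      intro x hx
      rw [aux_mem_ann_span_singleton] at hx ⊢
      rw [← mul_assoc, hx, zero_mul]
    have heq := hmax _ ⟨c * s, hcs, rfl⟩ hle
    have : a ∈ Submodule.annihilator (Ideal.span {c * s}) := by
      rw [aux_mem_ann_span_singleton]
      calc a * (c * s) = c * (s * a) := by ring
        _ = 0 := by rw [hsa, mul_zero]
    rw [heq, aux_mem_ann_span_singleton] at this
    exact this
  · intro h
    have : a * c ∈ P := by rw [h]; exact P.zero_mem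
    exact (hPp.mul_mem_iff_mem_or_mem.mp this).resolve_right hc

/-- Distinct minimal primes are incomparable. -/
lemma aux_not_le {P Q : Ideal R} (hP : P ∈ minimalPrimes R) (hQ : Q ∈ minimalPrimes R)
    (hne : P ≠ Q) : ¬ P ≤ Q := by
  intro hle
  haveI := hP.1.1
  exact hne (le_antisymm hle (hQ.2 ⟨hP.1.1, bot_le⟩ hle))

/-- The annihilator of a minimal prime is contained in every other minimal prime. -/
lemma aux_ann_le {P Q : Ideal R} (hP : P ∈ minimalPrimes R) (hQ : Q ∈ minimalPrimes R)
    (hne : P ≠ Q) : Submodule.annihilator P ≤ Q := by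
  haveI hQp : Q.IsPrime := hQ.1.1
  obtain ⟨x, hxP, hxQ⟩ := SetLike.not_le_iff_exists.mp (aux_not_le hP hQ hne)
  intro r hr
  have h1 : r * x = 0 := by
    have := Submodule.mem_annihilator.mp hr x hxP
    simpa using this
  have h2 : r * x ∈ Q := by rw [h1]; exact Q.zero_mem
  exact (hQp.mul_mem_iff_mem_or_mem.mp h2).resolve_right hxQ

/-- An element lying in every minimal prime of a reduced ring is zero. -/
lemma aux_mem_all_minimal (hsp : nilradical R = 0) {x : R}
    (h : ∀ P ∈ minimalPrimes R, x ∈ P) : x = 0 := by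
  have hx : x ∈ sInf (minimalPrimes R) := Ideal.mem_sInf.mpr fun {I} hI => h I hI
  rw [minimalPrimes, Ideal.sInf_minimalPrimes] at hx
  have hb : (⊥ : Ideal R).radical = nilradical R := by
    rw [nilradical, Ideal.zero_eq_bot]
  rw [hb, hsp] at hx
  simpa using hx

end Aux

/-- In a semiprime commutative Bezout Goldie ring, every minimal prime
is principal generated by an idempotent, and there are only finitely many minimal primes. -/
theorem minimalPrimes_principal_idempotent_and_finite (R : Type*) [CommRing R] [IsBezout R]
    (hsp : nilradical R = 0) (hG : IsGoldieRing R) :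
    (∀ P ∈ minimalPrimes R, ∃ e : R, IsIdempotentElem e ∧ P = Ideal.span {e}) ∧
      (minimalPrimes R).Finite := by
  obtain ⟨hdim, hacc⟩ := hG
  -- Finiteness of the set of minimal primes
  have hfin : (minimalPrimes R).Finite := by
    by_contra hinf
    have hinf' : (minimalPrimes R).Infinite := hinf
    let e := hinf'.natEmbedding
    refine hdim ⟨fun n => Submodule.annihilator ((e n : Ideal R)), ?_, ?_⟩
    · intro n hbot
      have hbot' : Submodule.annihilator ((e n : Ideal R)) = ⊥ := hbot
      obtain ⟨c, hc, hceq⟩ := aux_minimal_prime_eq_ann hsp hacc (e n).2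
      have hcmem : c ∈ Submodule.annihilator ((e n : Ideal R)) := by
        rw [Submodule.mem_annihilator]
        intro y hy
        rw [hceq, aux_mem_ann_span_singleton] at hy
        rw [smul_eq_mul, mul_comm, hy]
      rw [hbot'] at hcmem
      apply hc
      rw [(Submodule.mem_bot R).mp hcmem]
      exact (e n : Ideal R).zero_mem
    · intro i
      rw [disjoint_iff]
      rw [eq_bot_iff]
      intro x hx
      have hsup : (⨆ (j) (_ : j ≠ i), Submodule.annihilator ((e j : Ideal R))) ≤
          (e i : Ideal R) := by
        refine iSup₂_le fun j hj => aux_ann_le (e j).2 (e i).2 ?_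
        intro hcoe
        exact hj (e.injective (Subtype.ext hcoe))
      have hx1 : x ∈ Submodule.annihilator ((e i : Ideal R)) := hx.1
      have hx2 : x ∈ (e i : Ideal R) := hsup hx.2
      have : x * x = 0 := by
        have := Submodule.mem_annihilator.mp hx1 x hx2
        simpa using this
      simpa using aux_sq_zero hsp this
  refine ⟨?_, hfin⟩
  intro P hP
  classical
  haveI hPp : P.IsPrime := hP.1.1
  obtain ⟨c, hc, hceq⟩ := aux_minimal_prime_eq_ann hsp hacc hP
  -- prime avoidance: find p ∈ P outside all other minimal primes
  set s : Finset (Ideal R) := hfin.toFinset.erase P with hs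
  have hsprime : ∀ Q ∈ s, Q ∈ minimalPrimes R ∧ Q ≠ P := by
    intro Q hQ
    rw [hs, Finset.mem_erase, Set.Finite.mem_toFinset] at hQ
    exact ⟨hQ.2, hQ.1⟩
  have hnotsub : ¬ ((P : Set R) ⊆ ⋃ Q ∈ s, (Q : Set R)) := by
    intro hsub
    obtain ⟨Q, hQs, hle⟩ := (Ideal.subset_union_prime (f := fun Q : Ideal R => Q) P P
      (fun Q hQ _ _ => (hsprime Q hQ).1.1.1)).mp hsub
    exact aux_not_le hP (hsprime Q hQs).1 (hsprime Q hQs).2.symm hle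
  obtain ⟨p, hpP₀, hpnot⟩ := Set.not_subset.mp hnotsub
  have hpP : p ∈ P := hpP₀
  have hpQ : ∀ Q ∈ minimalPrimes R, Q ≠ P → p ∉ Q := by
    intro Q hQ hQP hpmem
    refine hpnot (Set.mem_iUnion₂.mpr ⟨Q, ?_, hpmem⟩)
    rw [hs, Finset.mem_erase, Set.Finite.mem_toFinset]
    exact ⟨hQP, hQ⟩
  -- key: elements of P annihilated by p vanish
  have hker : ∀ x, x ∈ P → x * p = 0 → x = 0 := by
    intro x hxP hxp
    apply aux_mem_all_minimal hsp
    intro Q hQ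
    by_cases hQP : Q = P
    · rwa [hQP]
    · haveI hQp : Q.IsPrime := hQ.1.1
      have : x * p ∈ Q := by rw [hxp]; exact Q.zero_mem
      exact (hQp.mul_mem_iff_mem_or_mem.mp this).resolve_right (hpQ Q hQ hQP)
  -- Bezout: span {p, c} is principal
  have hprin : (Ideal.span {p, c}).IsPrincipal := by
    apply IsBezout.isPrincipal_of_FG
    exact ⟨({p, c} : Finset R), by simp⟩
  obtain ⟨d, hd⟩ := hprin.principal
  rw [Ideal.submodule_span_eq] at hd
  obtain ⟨sₚ, hsd⟩ := Ideal.mem_span_singleton'.mp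
    (hd ▸ Ideal.subset_span (Set.mem_insert p {c}) : p ∈ Ideal.span {d})
  obtain ⟨t, htd⟩ := Ideal.mem_span_singleton'.mp
    (hd ▸ Ideal.subset_span (Set.mem_insert_of_mem p rfl) : c ∈ Ideal.span {d})
  obtain ⟨u, v, huv⟩ := Ideal.mem_span_pair.mp
    (hd ▸ Ideal.mem_span_singleton_self d : d ∈ Ideal.span {p, c})
  have hpc : p * c = 0 := by
    have := hpP
    rw [hceq, aux_mem_ann_span_singleton] at this
    exact this
  -- s * c = t * p = 0
  have hw : sₚ * c = t * p := by rw [← hsd, ← htd]; ring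
  have hsc : sₚ * c = 0 := by
    apply hker
    · rw [hceq, aux_mem_ann_span_singleton, hw]
      calc t * p * c = t * (p * c) := by ring
        _ = 0 := by rw [hpc, mul_zero]
    · calc sₚ * c * p = sₚ * (p * c) := by ring
        _ = 0 := by rw [hpc, mul_zero]
  have htp : t * p = 0 := by rw [← hw, hsc]
  -- d is regular
  have hdreg : ∀ x, x * d = 0 → x = 0 := by
    intro x hxd
    apply hker
    · rw [hceq, aux_mem_ann_span_singleton]
      calc x * c = t * (x * d) := by rw [← htd]; ring
        _ = 0 := by rw [hxd, mul_zero]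
    · calc x * p = sₚ * (x * d) := by rw [← hsd]; ring
        _ = 0 := by rw [hxd, mul_zero]
  have hone : u * sₚ + v * t = 1 := by
    have h0 : (u * sₚ + v * t - 1) * d = 0 := by
      calc (u * sₚ + v * t - 1) * d = u * (sₚ * d) + v * (t * d) - d := by ring
        _ = u * p + v * c - d := by rw [hsd, htd]
        _ = 0 := by rw [huv, sub_self]
    have := hdreg _ h0
    linear_combination this
  set e := u * sₚ with he
  set f := v * t with hf
  have hec : e ∈ P := by
    rw [hceq, aux_mem_ann_span_singleton]
    calc u * sₚ * c = u * (sₚ * c) := by ring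
      _ = 0 := by rw [hsc, mul_zero]
  have hfp : f * p = 0 := by
    calc v * t * p = v * (t * p) := by ring
      _ = 0 := by rw [htp, mul_zero]
  have hef : e * f = 0 := by
    apply hker
    · exact P.mul_mem_right f hec
    · calc e * f * p = e * (f * p) := by ring
        _ = 0 := by rw [hfp, mul_zero]
  have hidem : IsIdempotentElem e := by
    have h1 : e * e + e * f = e := by
      calc e * e + e * f = e * (e + f) := by ring
        _ = e := by rw [hone, mul_one]
    show e * e = e
    calc e * e = e * e + e * f := by rw [hef, add_zero]
      _ = e := h1
  refine ⟨e, hidem, le_antisymm ?_ ?_⟩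
  · intro x hx
    have hxf : x * f = 0 := by
      apply hker
      · exact P.mul_mem_right f hx
      · calc x * f * p = x * (f * p) := by ring
          _ = 0 := by rw [hfp, mul_zero]
    have : x = x * e := by
      calc x = x * (e + f) := by rw [hone, mul_one]
        _ = x * e + x * f := by ring
        _ = x * e := by rw [hxf, add_zero]
    rw [this]
    exact Ideal.mem_span_singleton'.mpr ⟨x, rfl⟩
  · rw [Ideal.span_le, Set.singleton_subset_iff]
    exact hec
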